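/- There exist α, β ∈ ℂ with |α|² − |β|² = 1 and t ∈ ℝ such that the matrix [[α, β], [conj(β), conj(α)]] · [[1, t], [0, 1]] cannot be written in the form [[A, N], [0, A⁻¹]] · [[σ, τ], [conj(τ), conj(σ)]] for any A ∈ ℝ with A > 0, N ∈ ℂ, and σ, τ ∈ ℂ with |σ|² − |τ|² = 1. (For instance one may take α, β real with β ≠ 0; hence the dressing action of SB(2,ℂ) on SU(1,1) is not complete.) -/

import Mathlib

open Matrix Complex

/-- there exist `α, β ∈ ℂ` with `|α|² − |β|² = 1` and `t ∈ ℝ`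
such that `[[α, β], [conj β, conj α]] · [[1, t], [0, 1]]` admits no
factorization `[[A, N], [0, A⁻¹]] · [[σ, τ], [conj τ, conj σ]]` with `A > 0`
real, `N ∈ ℂ` and `|σ|² − |τ|² = 1`; hence the dressing action of `SB(2,ℂ)` on
`SU(1,1)` is not complete. -/
theorem su11_dressing_not_complete :
    ∃ (α β : ℂ) (t : ℝ),
      ‖α‖ ^ 2 - ‖β‖ ^ 2 = 1 ∧
      ∀ A : ℝ, 0 < A → ∀ N σ τ : ℂ,
        ‖σ‖ ^ 2 - ‖τ‖ ^ 2 = 1 →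
        !![α, β; star β, star α] * !![1, (t : ℂ); 0, 1] ≠
          !![(A : ℂ), N; 0, (A : ℂ)⁻¹] * !![σ, τ; star τ, star σ] := by
  refine ⟨(Real.sqrt 2 : ℂ), 1, -Real.sqrt 2, ?_, ?_⟩
  · have h2 : (0:ℝ) ≤ 2 := by norm_num
    rw [Complex.norm_real, Real.norm_eq_abs, _root_.abs_of_nonneg (Real.sqrt_nonneg 2), Real.sq_sqrt h2]
    norm_num
  · intro A hA N σ τ hστ heq
    have h10 := congrFun (congrFun heq 1) 0
    have h11 := congrFun (congrFun heq 1) 1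
    simp [Matrix.mul_apply, Fin.sum_univ_two] at h10 h11
    -- h10 : 1 = A⁻¹ * star τ ; h11 : something = A⁻¹ * star σ
    have hAne : ((A:ℂ)) ≠ 0 := by
      exact_mod_cast Complex.ofReal_ne_zero.mpr (ne_of_gt hA)
    field_simp at h10
    have hσ0 : σ = 0 := by
      rcases h11 with h | h
      · exact absurd h (by exact_mod_cast ne_of_gt hA)
      · exact h
    have hτv : τ = (A : ℂ) := by
      have := congrArg (starRingEnd ℂ) h10
      simpa using this.symm
    rw [hσ0, hτv] at hστ
    simp [Complex.norm_real, abs_of_pos hA] at hστ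
    nlinarith [sq_nonneg A]
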